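/- Let d ≥ 1, let S be a linear subspace of ℝ^d with orthogonal projection matrix P_S, and let P_B = I_d − P_S be the projection onto its orthogonal complement B. Let α > 0, σ² > 0, η ∈ (1/(4(1+σ²)), 1/4), and δ > ((1−√(1−4η))/2)^{1/(2α)}. Suppose λ_S, λ_B : [0,∞) → ℝ are differentiable with λ_S(0) = λ_B(0) = δ and satisfy λ_S'(t) = λ_S(t)(−|λ_S(t)|^{4α} + |λ_S(t)|^{2α} − η) and λ_B'(t) = λ_B(t)(−(1+σ²)|λ_B(t)|^{4α} + |λ_B(t)|^{2α} − η) for all t ≥ 0. Then the matrix trajectory W(t) = λ_S(t)·P_S + λ_B(t)·P_B converges, as t → ∞, to ((1+√(1−4η))/2)^{1/(2α)}·P_S (entrywise, equivalently in spectral norm). -/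

import Mathlib

open Filter Matrix

/-- Strict upper barrier: if `f 0 < θ` and whenever `f` touches `θ` at time `t ≥ 0`
its derivative is negative, then `f t < θ` for all `t ≥ 0`. -/
lemma aux_barrier_lt (f : ℝ → ℝ) (hf : Differentiable ℝ f) (θ : ℝ)
    (h0 : f 0 < θ) (hstep : ∀ t, 0 ≤ t → f t = θ → deriv f t < 0) :
    ∀ t, 0 ≤ t → f t < θ := by
  intro t₁ ht₁
  by_contra hge
  push_neg at hge
  set A : Set ℝ := {t | t ∈ Set.Icc 0 t₁ ∧ θ ≤ f t} with hA
  have hne : A.Nonempty := ⟨t₁, ⟨⟨ht₁, le_rfl⟩, hge⟩⟩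
  have hbdd : BddBelow A := ⟨0, fun x hx => hx.1.1⟩
  set s := sInf A with hs
  have hclosed : IsClosed A := by
    apply IsClosed.inter
    · exact isClosed_Icc
    · exact isClosed_le continuous_const hf.continuous
  have hsA : s ∈ A := hclosed.csInf_mem hne hbdd
  have hs0 : 0 ≤ s := hsA.1.1
  have hslt : ∀ t, 0 ≤ t → t < s → f t < θ := by
    intro t ht hts
    by_contra h
    push_neg at h
    have : t ∈ A := ⟨⟨ht, le_trans hts.le hsA.1.2⟩, h⟩
    exact absurd (csInf_le hbdd this) (not_le.mpr hts)
  have hspos : 0 < s := by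
    rcases lt_or_eq_of_le hs0 with h | h
    · exact h
    · exact absurd (h ▸ hsA.2) (not_le.mpr h0)
  -- f s = θ
  have hfs : f s = θ := by
    rcases lt_or_eq_of_le hsA.2 with h | h
    · exfalso
      -- f > θ near s, but f < θ just left of s; contradiction by continuity
      have hcont : ContinuousAt f s := hf.continuous.continuousAt
      have : ∀ᶠ x in nhds s, θ < f x := hcont.eventually (eventually_gt_nhds h)
      have h2 : ∀ᶠ x in nhdsWithin s (Set.Iio s), θ < f x :=
        nhdsWithin_le_nhds this
      have h3 : ∀ᶠ x in nhdsWithin s (Set.Iio s), f x < θ := by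
        filter_upwards [Ioo_mem_nhdsLT_of_mem (Set.mem_Ioc.mpr ⟨hspos, le_rfl⟩)] with x hx
        exact hslt x hx.1.le hx.2
      obtain ⟨x, hx⟩ := (h2.and h3).exists
      exact absurd hx.2 (not_lt.mpr hx.1.le)
    · exact h.symm
  -- derivative at s is ≥ 0 from the left
  have hderiv := hstep s hs0 hfs
  have hHD : HasDerivAt f (deriv f s) s := (hf s).hasDerivAt
  have hslope : Tendsto (slope f s) (nhdsWithin s {s}ᶜ) (nhds (deriv f s)) :=
    hasDerivAt_iff_tendsto_slope.mp hHD
  have hle : nhdsWithin s (Set.Iio s) ≤ nhdsWithin s {s}ᶜ :=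
    nhdsWithin_mono s (fun x hx => ne_of_lt hx)
  have hslope' : Tendsto (slope f s) (nhdsWithin s (Set.Iio s)) (nhds (deriv f s)) :=
    hslope.mono_left hle
  have hpos : ∀ᶠ x in nhdsWithin s (Set.Iio s), 0 ≤ slope f s x := by
    filter_upwards [Ioo_mem_nhdsLT_of_mem (Set.mem_Ioc.mpr ⟨hspos, le_rfl⟩)] with x hx
    have hfx : f x < θ := hslt x hx.1.le hx.2
    rw [slope_def_field]
    rw [div_nonneg_iff]
    right
    constructor
    · rw [hfs]; linarith
    · linarith [hx.2]
  have : 0 ≤ deriv f s := ge_of_tendsto hslope' hpos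
  linarith

lemma aux_barrier_gt (f : ℝ → ℝ) (hf : Differentiable ℝ f) (θ : ℝ)
    (h0 : θ < f 0) (hstep : ∀ t, 0 ≤ t → f t = θ → 0 < deriv f t) :
    ∀ t, 0 ≤ t → θ < f t := by
  have := aux_barrier_lt (fun t => -f t) hf.neg (-θ) (by simpa using h0) ?_
  · intro t ht; have := this t ht; simpa using this
  · intro t ht hft
    have hft' : f t = θ := by linarith [neg_eq_iff_eq_neg.mp hft]
    have := hstep t ht hft'
    rw [deriv.fun_neg]
    linarith

/-- Exponential Grönwall-type decay. -/
lemma aux_gronwall (f : ℝ → ℝ) (c : ℝ) (hc : 0 < c)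
    (hcont : ContinuousOn f (Set.Ici 0))
    (hdiff : ∀ t : ℝ, 0 < t → DifferentiableAt ℝ f t)
    (hpos : ∀ t, 0 ≤ t → 0 ≤ f t)
    (hder : ∀ t, 0 < t → deriv f t ≤ -(2 * c) * f t) :
    Tendsto f atTop (nhds 0) := by
  set G : ℝ → ℝ := fun t => f t * Real.exp (2 * c * t) with hG
  have hexpdiff : Differentiable ℝ (fun t : ℝ => Real.exp (2 * c * t)) :=
    Real.differentiable_exp.comp (differentiable_id.const_mul _)
  have hGcont : ContinuousOn G (Set.Ici 0) :=
    hcont.mul hexpdiff.continuous.continuousOn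
  have hGdiff : ∀ t : ℝ, 0 < t → DifferentiableAt ℝ G t := fun t ht =>
    (hdiff t ht).mul (hexpdiff t)
  have hGderiv : ∀ t : ℝ, 0 < t → deriv G t = deriv f t * Real.exp (2 * c * t)
      + f t * (2 * c * Real.exp (2 * c * t)) := by
    intro t ht
    have h1 : HasDerivAt (fun t : ℝ => 2 * c * t) (2 * c) t := by
      simpa using (hasDerivAt_id t).const_mul (2 * c)
    have h2 : HasDerivAt (fun t : ℝ => Real.exp (2 * c * t))
        (Real.exp (2 * c * t) * (2 * c)) t := (Real.hasDerivAt_exp _).comp t h1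
    have h3 := ((hdiff t ht).hasDerivAt).mul h2
    rw [show G = (f * fun t => Real.exp (2 * c * t)) from rfl, h3.deriv]; ring
  have hanti : AntitoneOn G (Set.Ici 0) := by
    apply antitoneOn_of_deriv_nonpos (convex_Ici 0) hGcont
    · intro x hx
      rw [interior_Ici] at hx
      exact (hGdiff x hx).differentiableWithinAt
    intro x hx
    rw [interior_Ici] at hx
    rw [hGderiv x hx]
    have h1 := hder x hx
    have h2 := hpos x hx.le
    nlinarith [Real.exp_pos (2 * c * x)]
  have hub : ∀ t, 0 ≤ t → f t ≤ f 0 * Real.exp (-(2 * c) * t) := by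
    intro t ht
    have := hanti (Set.self_mem_Ici) ht ht
    have hG0 : G 0 = f 0 := by simp [hG]
    rw [hG0] at this
    have hexp : Real.exp (2 * c * t) > 0 := Real.exp_pos _
    have : f t * Real.exp (2 * c * t) ≤ f 0 := this
    calc f t ≤ f 0 / Real.exp (2 * c * t) := (le_div_iff₀ hexp).mpr this
      _ = f 0 * Real.exp (-(2 * c) * t) := by
          rw [show -(2 * c) * t = -(2 * c * t) by ring, Real.exp_neg, div_eq_mul_inv]
  have hlim : Tendsto (fun t => f 0 * Real.exp (-(2 * c) * t)) atTop (nhds 0) := by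
    have h1 : Tendsto (fun t : ℝ => -(2*c) * t) atTop atBot :=
      tendsto_id.const_mul_atTop_of_neg (by linarith)
    have h2 : Tendsto (fun t : ℝ => Real.exp (-(2*c) * t)) atTop (nhds 0) :=
      Real.tendsto_exp_atBot.comp h1
    simpa using h2.const_mul (f 0)
  apply tendsto_of_tendsto_of_tendsto_of_le_of_le' tendsto_const_nhds hlim
  · filter_upwards [eventually_ge_atTop 0] with t ht using hpos t ht
  · filter_upwards [eventually_ge_atTop 0] with t ht using hub t ht

set_option maxHeartbeats 2000000 in
/-- Under DirectSet(α) gradient flow on a single-layer linear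
network, with `P_S` the orthogonal projection onto the invariant subspace `S`
(a symmetric idempotent matrix), `P_B = I − P_S`, weight decay
`η ∈ (1/(4(1+σ²)), 1/4)` and initialization `δ > ((1−√(1−4η))/2)^{1/(2α)}`,
the matrix trajectory `W(t) = λ_S(t) P_S + λ_B(t) P_B` converges to
`((1+√(1−4η))/2)^{1/(2α)} · P_S`. -/
theorem directset_matrix_converges_to_projection
    (d : ℕ) (hd : 1 ≤ d)
    (PS : Matrix (Fin d) (Fin d) ℝ) (hidem : PS * PS = PS) (hsymm : PSᵀ = PS)
    (PB : Matrix (Fin d) (Fin d) ℝ) (hPB : PB = 1 - PS)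
    (α σ2 η δ : ℝ) (hα : 0 < α) (hσ : 0 < σ2)
    (hη1 : 1 / (4 * (1 + σ2)) < η) (hη2 : η < 1 / 4)
    (hδ : ((1 - Real.sqrt (1 - 4 * η)) / 2) ^ (1 / (2 * α)) < δ)
    (lamS lamB : ℝ → ℝ)
    (hdS : Differentiable ℝ lamS) (hdB : Differentiable ℝ lamB)
    (hS0 : lamS 0 = δ) (hB0 : lamB 0 = δ)
    (hodeS : ∀ t : ℝ, 0 ≤ t →
      deriv lamS t = lamS t * (-|lamS t| ^ (4 * α) + |lamS t| ^ (2 * α) - η))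
    (hodeB : ∀ t : ℝ, 0 ≤ t →
      deriv lamB t =
        lamB t * (-(1 + σ2) * |lamB t| ^ (4 * α) + |lamB t| ^ (2 * α) - η)) :
    Tendsto (fun t => lamS t • PS + lamB t • PB) atTop
      (nhds ((((1 + Real.sqrt (1 - 4 * η)) / 2) ^ (1 / (2 * α))) • PS)) := by
  have hσ1 : (0:ℝ) < 1 + σ2 := by linarith
  have hη0 : 0 < η := lt_trans (by positivity) hη1
  set sq := Real.sqrt (1 - 4 * η) with hsqdef
  have hsq2 : sq ^ 2 = 1 - 4 * η := Real.sq_sqrt (by linarith)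
  have hsqpos : 0 < sq := Real.sqrt_pos.mpr (by linarith)
  have hsqlt1 : sq < 1 := by nlinarith [hsq2, hsqpos]
  set um := (1 - sq) / 2 with humdef
  set up := (1 + sq) / 2 with hupdef
  have hum0 : 0 < um := by rw [humdef]; linarith
  have humup : um < up := by rw [humdef, hupdef]; linarith
  have hup0 : 0 < up := lt_trans hum0 humup
  have hprod : um * up = η := by
    rw [humdef, hupdef]; linear_combination (-(1:ℝ)/4) * hsq2
  have hsum : um + up = 1 := by rw [humdef, hupdef]; ring
  have hexp0 : 0 < 1 / (2 * α) := by positivity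
  have h2α0 : 0 < 2 * α := by linarith
  set aa := um ^ (1 / (2 * α)) with haadef
  set lstar := up ^ (1 / (2 * α)) with hlstardef
  have haa0 : 0 < aa := Real.rpow_pos_of_pos hum0 _
  have hlstar0 : 0 < lstar := Real.rpow_pos_of_pos hup0 _
  have haalstar : aa < lstar := Real.rpow_lt_rpow hum0.le humup hexp0
  have hδaa : aa < δ := hδ
  have hδ0 : 0 < δ := lt_trans haa0 hδaa
  -- rpow identities
  have key2 : ∀ u : ℝ, 0 < u → (u ^ (1 / (2 * α))) ^ (2 * α) = u := by
    intro u hu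
    rw [← Real.rpow_mul hu.le]
    rw [show 1 / (2 * α) * (2 * α) = 1 by field_simp]
    exact Real.rpow_one u
  have key2' : ∀ x : ℝ, 0 < x → (x ^ (2 * α)) ^ (1 / (2 * α)) = x := by
    intro x hx
    rw [← Real.rpow_mul hx.le]
    rw [show 2 * α * (1 / (2 * α)) = 1 by field_simp]
    exact Real.rpow_one x
  have key1 : ∀ x : ℝ, 0 ≤ x → x ^ (4 * α) = x ^ (2 * α) * x ^ (2 * α) := by
    intro x hx
    calc x ^ (4 * α) = x ^ (2 * α * 2) := by ring_nf
      _ = (x ^ (2 * α)) ^ ((2 : ℕ) : ℝ) := by rw [Real.rpow_mul hx]; norm_num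
      _ = (x ^ (2 * α)) ^ (2 : ℕ) := Real.rpow_natCast _ 2
      _ = x ^ (2 * α) * x ^ (2 * α) := by ring
  ----------------------------------------------------------------
  -- Part 1 : lamB → 0
  ----------------------------------------------------------------
  have hBlim : Tendsto lamB atTop (nhds 0) := by
    set cB := η - 1 / (4 * (1 + σ2)) with hcBdef
    have hcB0 : 0 < cB := by rw [hcBdef]; linarith
    have hsq0 : Tendsto (fun t => lamB t * lamB t) atTop (nhds 0) := by
      apply aux_gronwall _ cB hcB0 (hdB.mul hdB).continuous.continuousOn
        (fun t _ => ((hdB t).mul (hdB t)))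
        (fun t _ => mul_self_nonneg _)
      intro t ht
      have hd := ((hdB t).hasDerivAt.mul (hdB t).hasDerivAt).deriv
      rw [hd, hodeB t ht.le]
      set w := |lamB t| ^ (2 * α) with hwdef
      have hw0 : 0 ≤ w := Real.rpow_nonneg (abs_nonneg _) _
      have hw4 : |lamB t| ^ (4 * α) = w * w := key1 _ (abs_nonneg _)
      rw [hw4]
      have h4 : (0:ℝ) < 4 * (1 + σ2) := by linarith
      have hq : -(1 + σ2) * (w * w) + w - η ≤ -cB := by
        have hA : (0:ℝ) ≤ -cB - (-(1 + σ2) * (w * w) + w - η) := by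
          have h5 := mul_nonneg (sq_nonneg (2 * (1 + σ2) * w - 1)) (inv_nonneg.mpr h4.le)
          calc (0:ℝ) ≤ (2 * (1 + σ2) * w - 1) ^ 2 * (4 * (1 + σ2))⁻¹ := h5
            _ = -cB - (-(1 + σ2) * (w * w) + w - η) := by
                rw [hcBdef]; field_simp; ring
        linarith
      have hkey := mul_nonneg (mul_self_nonneg (lamB t))
        (sub_nonneg.mpr hq)
      rw [Pi.mul_apply]
      linarith [hkey]
    have habs : Tendsto (fun t => |lamB t|) atTop (nhds 0) := by
      have h := (Real.continuous_sqrt.tendsto 0).comp hsq0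
      rw [Real.sqrt_zero] at h
      refine h.congr fun t => ?_
      simp [Function.comp, Real.sqrt_mul_self_eq_abs]
    exact (tendsto_zero_iff_abs_tendsto_zero lamB).mpr habs
  ----------------------------------------------------------------
  -- Part 2 : invariance of lamS in [m, M]
  ----------------------------------------------------------------
  set m := min δ lstar with hmdef
  set M := max δ lstar with hMdef
  have hm0 : 0 < m := lt_min hδ0 hlstar0
  have haam : aa < m := lt_min hδaa haalstar
  -- factorization helper
  have hfact : ∀ x : ℝ, 0 < x →
      x * (-|x| ^ (4 * α) + |x| ^ (2 * α) - η)
        = x * ((x ^ (2 * α) - um) * (up - x ^ (2 * α))) := by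
    intro x hx
    rw [abs_of_pos hx, key1 x hx.le]
    rw [humdef, hupdef]
    linear_combination (-(x) / 4) * hsq2
  have hlow : ∀ t : ℝ, 0 ≤ t → m ≤ lamS t := by
    intro t ht
    by_contra hcon
    push_neg at hcon
    set θ := max ((aa + m) / 2) ((lamS t + m) / 2) with hθdef
    have hθaa : aa < θ := by
      have h1 : aa < (aa + m) / 2 := by linarith
      exact lt_of_lt_of_le h1 (le_max_left _ _)
    have hθm : θ < m := max_lt (by linarith) (by linarith)
    have hθlam : lamS t < θ := by
      have h1 : lamS t < (lamS t + m) / 2 := by linarith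
      exact lt_of_lt_of_le h1 (le_max_right _ _)
    have hθ0 : 0 < θ := lt_trans haa0 hθaa
    have hbar := aux_barrier_gt lamS hdS θ (by rw [hS0]; exact lt_of_lt_of_le hθm (min_le_left _ _)) ?_ t ht
    · exact absurd hbar (not_lt.mpr hθlam.le)
    intro s hs hfs
    rw [hodeS s hs, hfs, hfact θ hθ0]
    have h1 : um < θ ^ (2 * α) := by
      calc um = aa ^ (2 * α) := (key2 um hum0).symm
        _ < θ ^ (2 * α) := Real.rpow_lt_rpow haa0.le hθaa h2α0
    have h2 : θ ^ (2 * α) < up := by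
      calc θ ^ (2 * α) < lstar ^ (2 * α) :=
            Real.rpow_lt_rpow hθ0.le (lt_of_lt_of_le hθm (min_le_right _ _)) h2α0
        _ = up := key2 up hup0
    have := mul_pos (sub_pos.mpr h1) (sub_pos.mpr h2)
    positivity
  have hup' : ∀ t : ℝ, 0 ≤ t → lamS t ≤ M := by
    intro t ht
    by_contra hcon
    push_neg at hcon
    set θ := (M + lamS t) / 2 with hθdef
    have hθM : M < θ := by rw [hθdef]; linarith
    have hθ0 : 0 < θ := lt_trans (lt_of_lt_of_le hδ0 (le_max_left _ _)) hθM
    have hbar := aux_barrier_lt lamS hdS θ (by rw [hS0]; exact lt_of_le_of_lt (le_max_left _ _) hθM) ?_ t ht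
    · rw [hθdef] at hbar; linarith
    intro s hs hfs
    rw [hodeS s hs, hfs, hfact θ hθ0]
    have h2 : up < θ ^ (2 * α) := by
      calc up = lstar ^ (2 * α) := (key2 up hup0).symm
        _ < θ ^ (2 * α) :=
            Real.rpow_lt_rpow hlstar0.le (lt_of_le_of_lt (le_max_right _ _) hθM) h2α0
    have h1 : um < θ ^ (2 * α) := lt_trans humup h2
    have hneg : (θ ^ (2 * α) - um) * (up - θ ^ (2 * α)) < 0 :=
      mul_neg_of_pos_of_neg (sub_pos.mpr h1) (by linarith)
    exact mul_neg_of_pos_of_neg hθ0 hneg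
    ----------------------------------------------------------------
  -- Part 3 : lamS → lstar
  ----------------------------------------------------------------
  have hSpos : ∀ t : ℝ, 0 ≤ t → 0 < lamS t := fun t ht => lt_of_lt_of_le hm0 (hlow t ht)
  set vm := m ^ (2 * α) with hvmdef
  have hvm0 : 0 < vm := Real.rpow_pos_of_pos hm0 _
  have hvmum : um < vm := by
    calc um = aa ^ (2 * α) := (key2 um hum0).symm
      _ < vm := Real.rpow_lt_rpow haa0.le haam h2α0
  set cS := 2 * α * vm * (vm - um) with hcSdef
  have hcS0 : 0 < cS := by
    apply mul_pos (mul_pos (by linarith) hvm0) (sub_pos.mpr hvmum)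
  set F : ℝ → ℝ := fun t => (lamS t ^ (2 * α) - up) * (lamS t ^ (2 * α) - up) with hFdef
  have hVcont : ContinuousOn (fun t => lamS t ^ (2 * α)) (Set.Ici 0) := by
    intro t ht
    exact ((Real.continuousAt_rpow_const _ _
      (Or.inl (ne_of_gt (hSpos t ht)))).comp hdS.continuous.continuousAt).continuousWithinAt
  have hFcont : ContinuousOn F (Set.Ici 0) :=
    (hVcont.sub continuousOn_const).mul (hVcont.sub continuousOn_const)
  have hVD : ∀ t : ℝ, 0 < t → HasDerivAt (fun s => lamS s ^ (2 * α))
      (deriv lamS t * (2 * α) * lamS t ^ (2 * α - 1)) t := by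
    intro t ht
    exact HasDerivAt.rpow_const (hdS t).hasDerivAt (Or.inl (ne_of_gt (hSpos t ht.le)))
  have hFD : ∀ t : ℝ, 0 < t → HasDerivAt F
      ((deriv lamS t * (2 * α) * lamS t ^ (2 * α - 1)) * (lamS t ^ (2 * α) - up)
        + (lamS t ^ (2 * α) - up) * (deriv lamS t * (2 * α) * lamS t ^ (2 * α - 1))) t := by
    intro t ht
    exact ((hVD t ht).sub_const up).mul ((hVD t ht).sub_const up)
  have hFlim : Tendsto F atTop (nhds 0) := by
    apply aux_gronwall F cS hcS0 hFcont (fun t ht => (hFD t ht).differentiableAt)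
      (fun t ht => mul_self_nonneg _)
    intro t ht
    have hL0 : 0 < lamS t := hSpos t ht.le
    have hmL : m ≤ lamS t := hlow t ht.le
    set L := lamS t with hLdef
    set A := L ^ (2 * α) with hAdef
    have hA0 : 0 < A := Real.rpow_pos_of_pos hL0 _
    have hvmA : vm ≤ A := Real.rpow_le_rpow hm0.le hmL h2α0.le
    have h1 : deriv lamS t = L * ((A - um) * (up - A)) :=
      (hodeS t ht.le).trans (hfact L hL0)
    have h3 : L ^ (2 * α - 1) * L = A := by
      calc L ^ (2 * α - 1) * L = L ^ (2 * α - 1) * L ^ (1 : ℝ) := by rw [Real.rpow_one]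
        _ = L ^ (2 * α - 1 + 1) := (Real.rpow_add hL0 _ _).symm
        _ = A := by norm_num [hAdef]
    have hderivF : deriv F t = -(4 * α * A * (A - um)) * ((A - up) * (A - up)) := by
      rw [(hFD t ht).deriv, h1]
      linear_combination (4 * α * (A - um) * (up - A) * (A - up)) * h3
    have hFt : F t = (A - up) * (A - up) := rfl
    rw [hderivF, hFt]
    have h6 : vm * (vm - um) ≤ A * (A - um) := by
      have hx := mul_nonneg (sub_nonneg.mpr hvmA)
        (show (0:ℝ) ≤ A + vm - um by linarith)
      linarith [hx]
    have hcoef : 2 * cS ≤ 4 * α * A * (A - um) := by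
      rw [hcSdef]
      have h7 := mul_le_mul_of_nonneg_left h6 (by linarith : (0:ℝ) ≤ 4 * α)
      linarith [h7]
    exact mul_le_mul_of_nonneg_right (neg_le_neg hcoef) (mul_self_nonneg (A - up))
  have hVlim : Tendsto (fun t => lamS t ^ (2 * α)) atTop (nhds up) := by
    have habs : Tendsto (fun t => |lamS t ^ (2 * α) - up|) atTop (nhds 0) := by
      have h := (Real.continuous_sqrt.tendsto 0).comp hFlim
      rw [Real.sqrt_zero] at h
      refine h.congr fun t => ?_
      simp [Function.comp, hFdef, Real.sqrt_mul_self_eq_abs]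
    have hsub : Tendsto (fun t => lamS t ^ (2 * α) - up) atTop (nhds 0) :=
      (tendsto_zero_iff_abs_tendsto_zero _).mpr habs
    have h2 := hsub.add_const up
    rw [zero_add] at h2
    simpa using h2
  have hSlim : Tendsto lamS atTop (nhds lstar) := by
    have hcont : ContinuousAt (fun x : ℝ => x ^ (1 / (2 * α))) up :=
      Real.continuousAt_rpow_const _ _ (Or.inl (ne_of_gt hup0))
    have h := hcont.tendsto.comp hVlim
    refine Tendsto.congr' ?_ h
    filter_upwards [eventually_ge_atTop (0:ℝ)] with t ht
    exact key2' (lamS t) (hSpos t ht)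
  ----------------------------------------------------------------
  -- Assemble the matrix limit
  ----------------------------------------------------------------
  have hfinal := (hSlim.smul_const PS).add (hBlim.smul_const PB)
  rw [zero_smul, add_zero] at hfinal
  exact hfinal
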